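/- arXiv:1601.04652 — 2 statements merged into one kernel-verified Lean document; each statement's English description precedes it below -/
import Mathlib

section
/- Let σ > 0, v_c := √2·σ, f(x) := x²/(2σ²), and let v ≥ √2·v_c. Set y := (v − √(v² − 2v_c²))/2 and u := v − 2y. Then: (i) y² − v·y + σ² = 0; (ii) u = √(v² − 2v_c²); (iii) the pair (y, u) solves the system f'(v) = f'(y) + f'(y + u) and −f(y) + f(v) + (y − v)·f'(v) + 1 − f(y + u) + u·f'(y + u) = 0; and (iv) σ·(f'(v) − f'(y)) = (v + √(v² − 2v_c²))/(√2·v_c), i.e. f'(v) − f'(y) = α(v)/σ with α(v) = (v + √(v² − 2v_c²))/(√2·v_c). -/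
/-- second regime of the L-BBM analysis for f(x) = x²/(2σ²), v_c = √2·σ,
v ≥ √2·v_c: y = (v − √(v² − 2v_c²))/2 and u = v − 2y solve the stationarity system, and
σ·(f'(v) − f'(y)) = (v + √(v² − 2v_c²))/(√2·v_c). -/
theorem stmt_7 (σ v : ℝ) (hσ : 0 < σ) (vc : ℝ) (hvc : vc = Real.sqrt 2 * σ)
    (hv : Real.sqrt 2 * vc ≤ v)
    (f : ℝ → ℝ) (hfdef : f = fun x => x ^ 2 / (2 * σ ^ 2))
    (y u : ℝ) (hy : y = (v - Real.sqrt (v ^ 2 - 2 * vc ^ 2)) / 2)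
    (hu : u = v - 2 * y) :
    y ^ 2 - v * y + σ ^ 2 = 0 ∧
    u = Real.sqrt (v ^ 2 - 2 * vc ^ 2) ∧
    (deriv f v = deriv f y + deriv f (y + u) ∧
      -(f y) + f v + (y - v) * deriv f v + 1 - f (y + u) + u * deriv f (y + u) = 0) ∧
    σ * (deriv f v - deriv f y)
      = (v + Real.sqrt (v ^ 2 - 2 * vc ^ 2)) / (Real.sqrt 2 * vc) := by
  have hs2 : Real.sqrt 2 ^ 2 = 2 := Real.sq_sqrt (by norm_num)
  have hvc2 : vc ^ 2 = 2 * σ ^ 2 := by rw [hvc]; ring_nf; nlinarith [hs2]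
  have h2v : 2 * σ ≤ v := by
    have : Real.sqrt 2 * vc = 2 * σ := by rw [hvc]; nlinarith [hs2]
    linarith [this ▸ hv]
  have hnn : 0 ≤ v ^ 2 - 2 * vc ^ 2 := by nlinarith
  set r := Real.sqrt (v ^ 2 - 2 * vc ^ 2) with hr
  have hr2 : r ^ 2 = v ^ 2 - 2 * vc ^ 2 := Real.sq_sqrt hnn
  have hd : ∀ x : ℝ, deriv f x = x / σ ^ 2 := by
    intro x
    rw [hfdef]
    have : deriv (fun x : ℝ => x ^ 2 / (2 * σ ^ 2)) x
        = deriv (fun x : ℝ => x ^ 2) x / (2 * σ ^ 2) := by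
      simp [div_eq_mul_inv, deriv_mul_const]
    rw [this, deriv_pow_field]
    field_simp
    ring
  have hσ2 : σ ^ 2 ≠ 0 := by positivity
  have hquad : y ^ 2 - v * y + σ ^ 2 = 0 := by rw [hy]; nlinarith [hr2, hvc2]
  have hur : u = r := by rw [hu, hy]; ring
  refine ⟨hquad, hur, ⟨?_, ?_⟩, ?_⟩
  · rw [hd, hd, hd]
    field_simp
    nlinarith
  · rw [hd, hd, hfdef]
    simp only
    subst hu
    linear_combination (norm := (field_simp; ring)) hquad / σ ^ 2
  · have hvr : v - 2 * y = r := by rw [← hu, hur]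
    rw [hd, hd, hvc]
    have hs2' : (0:ℝ) < Real.sqrt 2 := Real.sqrt_pos.mpr (by norm_num)
    field_simp
    linear_combination (v - y) * hs2 + hvr
end

section
/- Let σ > 0, v ≥ 0, and 0 < τ < t. Then ∫_{−∞}^{vτ} (2πσ²τ)^{−1/2}·e^{τ − y²/(2σ²τ)} · ( ∫_{vt}^∞ (2πσ²(t − τ))^{−1/2}·e^{(t−τ) − (z−y)²/(2σ²(t−τ))} dz )² dy ≤ exp(−(v²/(2σ²) − 1)·(2t − τ)). -/
open MeasureTheory Real

lemma gauss_integrable (c μ : ℝ) (hc : 0 < c) :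
    Integrable (fun x : ℝ => (1 / Real.sqrt (2 * Real.pi * c)) * Real.exp (-((x - μ) ^ 2 / (2 * c)))) := by
  have h : ∀ x : ℝ, -((x - μ) ^ 2 / (2 * c)) = -(1 / (2 * c)) * (x - μ) ^ 2 := by
    intro x; field_simp
  simp_rw [h]
  exact ((integrable_exp_neg_mul_sq (by positivity : (0:ℝ) < 1 / (2 * c))).comp_sub_right μ).const_mul _

lemma gauss_integral (c μ : ℝ) (hc : 0 < c) :
    ∫ x : ℝ, (1 / Real.sqrt (2 * Real.pi * c)) * Real.exp (-((x - μ) ^ 2 / (2 * c))) = 1 := by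
  have h : ∀ x : ℝ, -((x - μ) ^ 2 / (2 * c)) = -(1 / (2 * c)) * (x - μ) ^ 2 := by
    intro x; field_simp
  simp_rw [h]
  rw [integral_const_mul, integral_sub_right_eq_self (fun x => Real.exp (-(1 / (2 * c)) * x ^ 2)) μ,
    integral_gaussian]
  rw [show Real.pi / (1 / (2 * c)) = 2 * Real.pi * c by field_simp]
  rw [one_div, inv_mul_eq_div, div_eq_one_iff_eq (by positivity)]

lemma gauss_tail (c : ℝ) (hc : 0 < c) (y a : ℝ) (hya : y ≤ a) :
    ∫ z in Set.Ioi a, (1 / Real.sqrt (2 * Real.pi * c)) * Real.exp (-((z - y) ^ 2 / (2 * c)))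
      ≤ Real.exp (-((a - y) ^ 2 / (2 * c))) := by
  set g : ℝ → ℝ := fun z =>
    Real.exp (-((a - y) ^ 2 / (2 * c))) * ((1 / Real.sqrt (2 * Real.pi * c)) * Real.exp (-((z - a) ^ 2 / (2 * c))))
  have hgi : Integrable g := (gauss_integrable c a hc).const_mul _
  have h1 : ∫ z in Set.Ioi a, (1 / Real.sqrt (2 * Real.pi * c)) * Real.exp (-((z - y) ^ 2 / (2 * c)))
      ≤ ∫ z in Set.Ioi a, g z := by
    apply integral_mono_of_nonneg
    · filter_upwards with z; positivity
    · exact hgi.restrict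
    · filter_upwards [ae_restrict_mem measurableSet_Ioi] with z hz
      have hz' : a ≤ z := le_of_lt hz
      have key : (a - y) ^ 2 + (z - a) ^ 2 ≤ (z - y) ^ 2 := by nlinarith [mul_nonneg (sub_nonneg.2 hz') (sub_nonneg.2 hya)]
      have : Real.exp (-((z - y) ^ 2 / (2 * c)))
          ≤ Real.exp (-((a - y) ^ 2 / (2 * c))) * Real.exp (-((z - a) ^ 2 / (2 * c))) := by
        rw [← Real.exp_add]
        apply Real.exp_le_exp.2
        rw [← neg_add, neg_le_neg_iff, ← add_div]
        exact div_le_div_of_nonneg_right key (by positivity)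
      calc (1 / Real.sqrt (2 * Real.pi * c)) * Real.exp (-((z - y) ^ 2 / (2 * c)))
          ≤ (1 / Real.sqrt (2 * Real.pi * c)) * (Real.exp (-((a - y) ^ 2 / (2 * c))) * Real.exp (-((z - a) ^ 2 / (2 * c)))) := by
            apply mul_le_mul_of_nonneg_left this (by positivity)
        _ = g z := by simp only [g]; ring
  have h2 : ∫ z in Set.Ioi a, g z ≤ ∫ z, g z := by
    apply setIntegral_le_integral hgi
    filter_upwards with z; positivity
  have h3 : ∫ z, g z = Real.exp (-((a - y) ^ 2 / (2 * c))) := by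
    simp only [g]
    rw [integral_const_mul, gauss_integral c a hc, mul_one]
  linarith

/-- Gaussian double-integral bound in the second moment computation for the
number of leftward-leaning particles of the BBM beyond vt. -/
theorem stmt_19 (σ v τ t : ℝ) (hσ : 0 < σ) (hv : 0 ≤ v) (hτ : 0 < τ) (hτt : τ < t) :
    (∫ y in Set.Iic (v * τ),
        (1 / Real.sqrt (2 * Real.pi * σ ^ 2 * τ))
          * Real.exp (τ - y ^ 2 / (2 * σ ^ 2 * τ))
          * (∫ z in Set.Ioi (v * t),
              (1 / Real.sqrt (2 * Real.pi * σ ^ 2 * (t - τ)))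
                * Real.exp ((t - τ) - (z - y) ^ 2 / (2 * σ ^ 2 * (t - τ)))) ^ 2)
      ≤ Real.exp (-(v ^ 2 / (2 * σ ^ 2) - 1) * (2 * t - τ)) := by
  have hs : 0 < t - τ := by linarith
  set c₁ := σ ^ 2 * τ with hc₁def
  have hc₁ : 0 < c₁ := by positivity
  set c₂ := σ ^ 2 * (t - τ) with hc₂def
  have hc₂ : 0 < c₂ := by positivity
  set A := Real.exp (-(v ^ 2 / (2 * σ ^ 2) - 1) * (2 * t - τ)) with hAdef
  set F : ℝ → ℝ := fun y =>
    (1 / Real.sqrt (2 * Real.pi * σ ^ 2 * τ)) * Real.exp (τ - y ^ 2 / (2 * σ ^ 2 * τ))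
      * (∫ z in Set.Ioi (v * t),
          (1 / Real.sqrt (2 * Real.pi * σ ^ 2 * (t - τ)))
            * Real.exp ((t - τ) - (z - y) ^ 2 / (2 * σ ^ 2 * (t - τ)))) ^ 2 with hFdef
  set G : ℝ → ℝ := fun y =>
    A * ((1 / Real.sqrt (2 * Real.pi * c₁)) * Real.exp (-((y - v * τ) ^ 2 / (2 * c₁)))) with hGdef
  have hGi : Integrable G := (gauss_integrable c₁ (v * τ) hc₁).const_mul _
  have hGnn : ∀ y : ℝ, 0 ≤ G y := fun y => by
    simp only [hGdef, hAdef]; positivity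
  have inner_bound : ∀ y, y ≤ v * τ →
      (∫ z in Set.Ioi (v * t),
          (1 / Real.sqrt (2 * Real.pi * σ ^ 2 * (t - τ)))
            * Real.exp ((t - τ) - (z - y) ^ 2 / (2 * σ ^ 2 * (t - τ))))
      ≤ Real.exp (t - τ) * Real.exp (-((v * t - y) ^ 2 / (2 * c₂))) := by
    intro y hy
    have hrw : ∀ z : ℝ, (1 / Real.sqrt (2 * Real.pi * σ ^ 2 * (t - τ)))
          * Real.exp ((t - τ) - (z - y) ^ 2 / (2 * σ ^ 2 * (t - τ)))
        = Real.exp (t - τ) * ((1 / Real.sqrt (2 * Real.pi * c₂)) * Real.exp (-((z - y) ^ 2 / (2 * c₂)))) := by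
      intro z
      rw [show (t - τ) - (z - y) ^ 2 / (2 * σ ^ 2 * (t - τ)) = (t - τ) + -((z - y) ^ 2 / (2 * c₂)) by
          rw [hc₂def]; field_simp; ring, Real.exp_add]
      rw [show 2 * Real.pi * σ ^ 2 * (t - τ) = 2 * Real.pi * c₂ by rw [hc₂def]; ring]
      ring
    simp_rw [hrw]
    rw [integral_const_mul]
    apply mul_le_mul_of_nonneg_left _ (Real.exp_nonneg _)
    apply gauss_tail c₂ hc₂ y (v * t)
    have : v * τ ≤ v * t := mul_le_mul_of_nonneg_left hτt.le hv
    linarith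
  have inner_nonneg : ∀ y : ℝ, 0 ≤ ∫ z in Set.Ioi (v * t),
      (1 / Real.sqrt (2 * Real.pi * σ ^ 2 * (t - τ)))
        * Real.exp ((t - τ) - (z - y) ^ 2 / (2 * σ ^ 2 * (t - τ))) := by
    intro y
    apply integral_nonneg
    intro z
    positivity
  have hpt : ∀ y ∈ Set.Iic (v * τ), F y ≤ G y := by
    intro y hy
    have hy' : y ≤ v * τ := hy
    have hsq : (∫ z in Set.Ioi (v * t),
          (1 / Real.sqrt (2 * Real.pi * σ ^ 2 * (t - τ)))
            * Real.exp ((t - τ) - (z - y) ^ 2 / (2 * σ ^ 2 * (t - τ)))) ^ 2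
        ≤ (Real.exp (t - τ) * Real.exp (-((v * t - y) ^ 2 / (2 * c₂)))) ^ 2 :=
      pow_le_pow_left₀ (inner_nonneg y) (inner_bound y hy') 2
    have step1 : F y ≤ (1 / Real.sqrt (2 * Real.pi * σ ^ 2 * τ)) * Real.exp (τ - y ^ 2 / (2 * σ ^ 2 * τ))
        * (Real.exp (t - τ) * Real.exp (-((v * t - y) ^ 2 / (2 * c₂)))) ^ 2 := by
      simp only [hFdef]
      apply mul_le_mul_of_nonneg_left hsq (by positivity)
    refine step1.trans ?_
    -- combine exponentials and compare exponents
    have hE : Real.exp (τ - y ^ 2 / (2 * σ ^ 2 * τ))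
        * (Real.exp (t - τ) * Real.exp (-((v * t - y) ^ 2 / (2 * c₂)))) ^ 2
        = Real.exp ((τ - y ^ 2 / (2 * c₁)) + 2 * (t - τ) + -((v * t - y) ^ 2 / c₂)) := by
      rw [← Real.exp_add,
        pow_two (Real.exp (t - τ + -((v * t - y) ^ 2 / (2 * c₂)))),
        ← Real.exp_add, ← Real.exp_add, Real.exp_eq_exp]
      rw [hc₁def, hc₂def]
      have h1 : σ ≠ 0 := ne_of_gt hσ
      have h2 : τ ≠ 0 := ne_of_gt hτ
      have h3 : t - τ ≠ 0 := ne_of_gt hs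
      field_simp
      ring
    have hexp : (τ - y ^ 2 / (2 * c₁)) + 2 * (t - τ) + -((v * t - y) ^ 2 / c₂)
        ≤ -(v ^ 2 / (2 * σ ^ 2) - 1) * (2 * t - τ) + -((y - v * τ) ^ 2 / (2 * c₁)) := by
      rw [← sub_nonneg]
      have hid : (-(v ^ 2 / (2 * σ ^ 2) - 1) * (2 * t - τ) + -((y - v * τ) ^ 2 / (2 * c₁)))
          - ((τ - y ^ 2 / (2 * c₁)) + 2 * (t - τ) + -((v * t - y) ^ 2 / c₂))
          = (v * t - y) * ((v * t - y) - v * (t - τ)) / c₂ := by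
        rw [hc₁def, hc₂def]
        field_simp
        ring
      rw [hid]
      apply div_nonneg _ hc₂.le
      have hw : v * (t - τ) ≤ v * t - y := by
        have : v * τ ≤ v * t := mul_le_mul_of_nonneg_left hτt.le hv
        nlinarith
      have hw0 : 0 ≤ v * t - y := le_trans (by positivity) hw
      nlinarith
    calc (1 / Real.sqrt (2 * Real.pi * σ ^ 2 * τ)) * Real.exp (τ - y ^ 2 / (2 * σ ^ 2 * τ))
          * (Real.exp (t - τ) * Real.exp (-((v * t - y) ^ 2 / (2 * c₂)))) ^ 2
        = (1 / Real.sqrt (2 * Real.pi * c₁))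
            * Real.exp ((τ - y ^ 2 / (2 * c₁)) + 2 * (t - τ) + -((v * t - y) ^ 2 / c₂)) := by
          rw [mul_assoc, hE, show 2 * Real.pi * σ ^ 2 * τ = 2 * Real.pi * c₁ by rw [hc₁def]; ring]
      _ ≤ (1 / Real.sqrt (2 * Real.pi * c₁))
            * Real.exp (-(v ^ 2 / (2 * σ ^ 2) - 1) * (2 * t - τ) + -((y - v * τ) ^ 2 / (2 * c₁))) := by
          exact mul_le_mul_of_nonneg_left (Real.exp_le_exp.2 hexp) (by positivity)
      _ = G y := by
          simp only [hGdef, hAdef, Real.exp_add]; ring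
  calc (∫ y in Set.Iic (v * τ), F y) ≤ ∫ y in Set.Iic (v * τ), G y := by
        apply integral_mono_of_nonneg
        · filter_upwards with y
          simp only [hFdef]
          positivity
        · exact hGi.restrict
        · filter_upwards [ae_restrict_mem measurableSet_Iic] with y hy using hpt y hy
    _ ≤ ∫ y, G y := setIntegral_le_integral hGi (by filter_upwards with y using hGnn y)
    _ = A := by
        simp only [hGdef]
        rw [integral_const_mul, gauss_integral c₁ (v * τ) hc₁, mul_one]
end
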